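/- For every graph H and every ε > 0, if Theorem A holds (every ε'-coherent massed graph contains a proper fuzzy odd subdivision of H as an induced subgraph for suitable ε' > 0) and Rödl's theorem holds, then there exists ε > 0 such that for all n > 1, every n-vertex graph containing neither a proper fuzzy odd subdivision of H nor the complement of a proper fuzzy odd subdivision of H as an induced subgraph contains two sets A, B of vertices with |A|, |B| ≥ εn such that A is complete or anticomplete to B. -/

import Mathlib

open SimpleGraph

/-- Sets `A`, `B` are complete to each other: disjoint with all edges between them. -/
def Complete {V : Type} (G : SimpleGraph V) (A B : Set V) : Prop :=
  Disjoint A B ∧ ∀ a ∈ A, ∀ b ∈ B, G.Adj a b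

/-- Sets `A`, `B` are anticomplete: disjoint with no edges between them. -/
def Anticomplete {V : Type} (G : SimpleGraph V) (A B : Set V) : Prop :=
  Disjoint A B ∧ ∀ a ∈ A, ∀ b ∈ B, ¬ G.Adj a b

/-- `V1 = N(u) \ N[v]`. -/
def sideA {V : Type} (G : SimpleGraph V) (u v : V) : Set V :=
  G.neighborSet u \ insert v (G.neighborSet v)

/-- `V2 = N(v) \ N[u]`. -/
def sideB {V : Type} (G : SimpleGraph V) (u v : V) : Set V :=
  G.neighborSet v \ insert u (G.neighborSet u)

/-- `V3 = N(u) ∩ N(v)`. -/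
def sideC {V : Type} (G : SimpleGraph V) (u v : V) : Set V :=
  G.neighborSet u ∩ G.neighborSet v

/-- The pair `{a, b}` crosses one of the three pairs of sets `(V1,V2)`, `(V2,V3)`, `(V1,V3)`. -/
def pivotCross {V : Type} (G : SimpleGraph V) (u v a b : V) : Prop :=
  (a ∈ sideA G u v ∧ b ∈ sideB G u v) ∨ (a ∈ sideB G u v ∧ b ∈ sideA G u v) ∨
  (a ∈ sideB G u v ∧ b ∈ sideC G u v) ∨ (a ∈ sideC G u v ∧ b ∈ sideB G u v) ∨
  (a ∈ sideA G u v ∧ b ∈ sideC G u v) ∨ (a ∈ sideC G u v ∧ b ∈ sideA G u v)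

lemma pivotCross_comm {V : Type} {G : SimpleGraph V} {u v a b : V} :
    pivotCross G u v a b ↔ pivotCross G u v b a := by
  unfold pivotCross; tauto

/-- The pivot `G ∧ uv`: complement the edges between each of the pairs `(V1,V2)`, `(V2,V3)`,
`(V1,V3)` and then swap the labels of `u` and `v`. -/
def pivotGraph {V : Type} (G : SimpleGraph V) (u v : V) : SimpleGraph V :=
  letI := Classical.decEq V
  { Adj := fun x y => x ≠ y ∧
      Xor' (G.Adj (Equiv.swap u v x) (Equiv.swap u v y))
        (pivotCross G u v (Equiv.swap u v x) (Equiv.swap u v y)),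
    symm := ⟨by
      rintro x y ⟨hxy, h⟩
      refine ⟨hxy.symm, ?_⟩
      have h1 : G.Adj (Equiv.swap u v x) (Equiv.swap u v y) ↔
          G.Adj (Equiv.swap u v y) (Equiv.swap u v x) := G.adj_comm _ _
      have h2 : pivotCross G u v (Equiv.swap u v x) (Equiv.swap u v y) ↔
          pivotCross G u v (Equiv.swap u v y) (Equiv.swap u v x) := pivotCross_comm
      unfold Xor' at h ⊢
      rw [← h1, ← h2]; exact h⟩,
    loopless := ⟨fun _ h => h.1 rfl⟩ }

/-- `H` is a pivot-minor of `G`: `H` is obtainable from `G` (up to isomorphism) by a sequence of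
vertex deletions and pivots of edges. -/
inductive IsPivotMinor : ∀ {W U : Type}, SimpleGraph W → SimpleGraph U → Prop
  | of_iso {W U : Type} {H : SimpleGraph W} {G : SimpleGraph U} :
      Nonempty (H ≃g G) → IsPivotMinor H G
  | pivot {W U : Type} {H : SimpleGraph W} {G : SimpleGraph U} (u v : U) :
      G.Adj u v → IsPivotMinor H (pivotGraph G u v) → IsPivotMinor H G
  | delete {W U : Type} {H : SimpleGraph W} {G : SimpleGraph U} (s : Set U) :
      IsPivotMinor H (G.induce s) → IsPivotMinor H G

/-- `G` is obtained from `H` by replacing each edge `uv` of `H` with a path whose length satisfies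
`P u v h`: there are internally disjoint induced paths of `G` joining the images of the branch
vertices, covering all of `G`, whose edges are exactly the edges of `G`. -/
def IsEdgeReplacement {U W : Type} (H : SimpleGraph U)
    (P : ∀ u v : U, H.Adj u v → ℕ → Prop) (G : SimpleGraph W) : Prop :=
  ∃ (x : U ↪ W) (p : ∀ u v : U, H.Adj u v → G.Walk (x u) (x v)),
    (∀ u v h, (p u v h).IsPath) ∧
    (∀ u v h, P u v h (p u v h).length) ∧
    (∀ u v h, p v u h.symm = (p u v h).reverse) ∧
    (∀ u v h w, w ∈ (p u v h).support → w ∈ Set.range x → w = x u ∨ w = x v) ∧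
    (∀ u v h k l h', s(u, v) ≠ s(k, l) →
      ∀ w, w ∈ (p u v h).support → w ∈ (p k l h').support → w ∈ Set.range x) ∧
    (∀ w : W, w ∈ Set.range x ∨ ∃ u v h, w ∈ (p u v h).support) ∧
    (∀ a b : W, G.Adj a b ↔ ∃ u v h, (p u v h).toSubgraph.Adj a b)

/-- `G` is obtained from `H` by replacing each edge with a path whose length satisfies `P`. -/
def IsSubdivisionWith {U W : Type} (H : SimpleGraph U) (P : ℕ → Prop) (G : SimpleGraph W) : Prop :=
  IsEdgeReplacement H (fun _ _ _ n => P n) G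

/-- An `F`-filleting of `G`: subdivide (at least once) every edge of `G` not in `F`, and do not
subdivide the edges of `F`. -/
def IsFilleting {U W : Type} (G F : SimpleGraph U) (H : SimpleGraph W) : Prop :=
  IsEdgeReplacement G (fun u v _ n => (F.Adj u v ∧ n = 1) ∨ (¬ F.Adj u v ∧ 2 ≤ n)) H

/-- Join of `H` with a single new vertex (`H + K_1`), the new vertex being `none`. -/
def addApex {W : Type} (H : SimpleGraph W) : SimpleGraph (Option W) :=
  SimpleGraph.fromRel fun a b =>
    a = none ∨ ∃ u v : W, a = some u ∧ b = some v ∧ H.Adj u v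

/-- `F` with ends `a`, `b` is a fuzzy odd path (with length satisfying `P`): it consists of an odd
path from `a` to `b` through all the vertices, possibly together with one extra edge `xy` between
two internal vertices such that `xy` lies in a triangle. -/
def IsFuzzyOddPath {T : Type} (F : SimpleGraph T) (a b : T) (P : ℕ → Prop) : Prop :=
  ∃ p : F.Walk a b, p.IsPath ∧ Odd p.length ∧ P p.length ∧ (∀ t : T, t ∈ p.support) ∧
    ((∀ c d : T, F.Adj c d ↔ p.toSubgraph.Adj c d) ∨
      ∃ x y : T, x ∈ p.support ∧ y ∈ p.support ∧ x ≠ a ∧ x ≠ b ∧ y ≠ a ∧ y ≠ b ∧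
        F.Adj x y ∧ ¬ p.toSubgraph.Adj x y ∧ (∃ z : T, F.Adj x z ∧ F.Adj y z) ∧
        (∀ c d : T, F.Adj c d ↔ (p.toSubgraph.Adj c d ∨ (c = x ∧ d = y) ∨ (c = y ∧ d = x))))

/-- `G` is a proper fuzzy odd subdivision of `H`: `G` is obtained from `H` by replacing each edge
with a fuzzy odd path of (odd) length at least `3`. -/
def IsProperFuzzyOddSubdivision {U W : Type} (H : SimpleGraph U) (G : SimpleGraph W) : Prop :=
  ∃ (x : U ↪ W) (S : ∀ u v : U, H.Adj u v → Set W)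
    (hS : ∀ u v h, x u ∈ S u v h ∧ x v ∈ S u v h),
    (∀ u v h, S v u h.symm = S u v h) ∧
    (∀ u v h w, w ∈ S u v h → w ∈ Set.range x → w = x u ∨ w = x v) ∧
    (∀ u v h k l h', s(u, v) ≠ s(k, l) → ∀ w, w ∈ S u v h → w ∈ S k l h' → w ∈ Set.range x) ∧
    (∀ w : W, w ∈ Set.range x ∨ ∃ u v h, w ∈ S u v h) ∧
    (∀ a b : W, G.Adj a b → ∃ u v h, a ∈ S u v h ∧ b ∈ S u v h) ∧
    (∀ u v h, IsFuzzyOddPath (G.induce (S u v h))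
      ⟨x u, (hS u v h).1⟩ ⟨x v, (hS u v h).2⟩ (fun n => 3 ≤ n))

/-- A mass on a graph `G`. -/
structure IsMass {V : Type} (G : SimpleGraph V) (μ : Set V → ℝ) : Prop where
  map_empty : μ ∅ = 0
  map_univ : μ Set.univ = 1
  mono : ∀ ⦃X Y : Set V⦄, X ⊆ Y → μ X ≤ μ Y
  subadditive : ∀ X Y : Set V, μ (X ∪ Y) ≤ μ X + μ Y

/-- `N^r[v]`: the ball of radius `r` about `v`. -/
def ball {V : Type} (G : SimpleGraph V) (v : V) (r : ℕ) : Set V :=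
  {w | ∃ p : G.Walk v w, p.length ≤ r}

/-- `(G, μ)` is `ε`-coherent. -/
def EpsCoherent {V : Type} (G : SimpleGraph V) (μ : Set V → ℝ) (ε : ℝ) : Prop :=
  (∀ v : V, μ {v} < ε) ∧ (∀ v : V, μ (G.neighborSet v) < ε) ∧
  ∀ A B : Set V, Anticomplete G A B → min (μ A) (μ B) < ε

/-- `(G, μ)` is `(ε, r)`-coherent. -/
def EpsRCoherent {V : Type} (G : SimpleGraph V) (μ : Set V → ℝ) (ε : ℝ) (r : ℕ) : Prop :=
  (∀ v : V, μ (_root_.ball G v r) < ε) ∧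
  ∀ A B : Set V, Anticomplete G A B → min (μ A) (μ B) < ε

/-- `(G, μ)` is `(δ, r)`-focused. -/
def Focused {V : Type} (G : SimpleGraph V) (μ : Set V → ℝ) (δ : ℝ) (r : ℕ) : Prop :=
  ∀ Z : Set V, δ ≤ μ Z → ∃ v : Z, μ Z / 2 ≤ μ (Subtype.val '' _root_.ball (G.induce Z) v r)

/-- `N[X]`. -/
def closedNbhd {V : Type} (G : SimpleGraph V) (X : Set V) : Set V :=
  X ∪ {w | ∃ a ∈ X, G.Adj a w}

/-- `x` is an `r`-centre of `X`: every vertex of `X` is within distance `r` of `x` in `G[X]`. -/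
def IsCentre {V : Type} (G : SimpleGraph V) (X : Set V) (x : V) (hx : x ∈ X) (r : ℕ) : Prop :=
  ∀ y : X, ∃ p : (G.induce X).Walk ⟨x, hx⟩ y, p.length ≤ r

/-- A leaf: a vertex of degree at most 1. -/
def IsLeaf {V : Type} (G : SimpleGraph V) (v : V) : Prop := (G.neighborSet v).Subsingleton

/-- `P` is a path graph. -/
def IsPathGraph {U : Type} (P : SimpleGraph U) : Prop :=
  ∃ (a b : U) (w : P.Walk a b), w.IsPath ∧ (∀ u : U, u ∈ w.support) ∧
    ∀ x y : U, P.Adj x y ↔ w.toSubgraph.Adj x y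

/-- A caterpillar: a tree `T` such that `T − L(T)` is a path. -/
def IsCaterpillar {U : Type} (T : SimpleGraph U) : Prop :=
  T.IsTree ∧ IsPathGraph (T.induce {v | ¬ IsLeaf T v})

/-- Disjoint union of `q` stars, each with `p` leaves: `(i, none)` is the centre of the `i`-th
star and `(i, some j)` its leaves. -/
def starForest (q p : ℕ) : SimpleGraph (Fin q × Option (Fin p)) :=
  SimpleGraph.fromRel fun a b => a.1 = b.1 ∧ a.2 = none ∧ b.2 ≠ none

/-- The clique number `ω(G)`. -/
noncomputable def cliqueNumber {V : Type} [Fintype V] (G : SimpleGraph V) : ℕ :=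
  sSup {n | ∃ s : Finset V, G.IsNClique n s}

/-- The independence number `α(G)`. -/
noncomputable def indepNumber {V : Type} [Fintype V] (G : SimpleGraph V) : ℕ :=
  cliqueNumber Gᶜ


section Aux

lemma toSubgraph_map_adj_iff {T1 T2 : Type} {F1 : SimpleGraph T1} {F2 : SimpleGraph T2}
    (f : F1 →g F2) (hf : Function.Injective f) {a b : T1} (p : F1.Walk a b) (c d : T1) :
    (p.map f).toSubgraph.Adj (f c) (f d) ↔ p.toSubgraph.Adj c d := by
  rw [Walk.toSubgraph_map]
  constructor
  · rintro ⟨x, y, h, hx, hy⟩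
    rwa [← hf hx, ← hf hy]
  · intro h; exact ⟨c, d, h, rfl, rfl⟩

lemma IsFuzzyOddPath.transport {T1 T2 : Type} {F1 : SimpleGraph T1} {F2 : SimpleGraph T2}
    (e : F1 ≃g F2) {a b : T1} {P : ℕ → Prop}
    (h : IsFuzzyOddPath F1 a b P) : IsFuzzyOddPath F2 (e a) (e b) P := by
  obtain ⟨p, hp, hodd, hP, hsupp, hmain⟩ := h
  have hinj : Function.Injective (e : F1 →g F2) := e.injective
  refine ⟨p.map (e : F1 →g F2), Walk.map_isPath_of_injective hinj hp, ?_, ?_, ?_, ?_⟩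
  · rwa [Walk.length_map]
  · rwa [Walk.length_map]
  · intro t
    rw [Walk.support_map]
    have := hsupp (e.symm t)
    have ht : t = (e : F1 →g F2) (e.symm t) := by simp
    rw [ht]
    exact List.mem_map_of_mem this
  · rcases hmain with hm | ⟨x, y, hxs, hys, hxa, hxb, hya, hyb, hadj, hns, ⟨z, hz1, hz2⟩, hiff⟩
    · left
      intro c d
      have hc : c = (e : F1 →g F2) (e.symm c) := by simp
      have hd : d = (e : F1 →g F2) (e.symm d) := by simp
      rw [hc, hd, toSubgraph_map_adj_iff _ hinj]
      have : F2.Adj ((e : F1 →g F2) (e.symm c)) ((e : F1 →g F2) (e.symm d)) ↔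
          F1.Adj (e.symm c) (e.symm d) := e.map_adj_iff
      rw [this]
      exact hm _ _
    · right
      refine ⟨e x, e y, ?_, ?_, ?_, ?_, ?_, ?_, ?_, ?_, ⟨e z, ?_, ?_⟩, ?_⟩
      · rw [Walk.support_map]; exact List.mem_map_of_mem hxs
      · rw [Walk.support_map]; exact List.mem_map_of_mem hys
      · exact fun hh => hxa (e.injective hh)
      · exact fun hh => hxb (e.injective hh)
      · exact fun hh => hya (e.injective hh)
      · exact fun hh => hyb (e.injective hh)
      · exact e.map_adj_iff.mpr hadj
      · intro hh; exact hns ((toSubgraph_map_adj_iff _ hinj p x y).mp hh)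
      · exact e.map_adj_iff.mpr hz1
      · exact e.map_adj_iff.mpr hz2
      · intro c d
        have hc : c = (e : F1 →g F2) (e.symm c) := by simp
        have hd : d = (e : F1 →g F2) (e.symm d) := by simp
        rw [hc, hd, toSubgraph_map_adj_iff _ hinj]
        have h2 : F2.Adj ((e : F1 →g F2) (e.symm c)) ((e : F1 →g F2) (e.symm d)) ↔
            F1.Adj (e.symm c) (e.symm d) := e.map_adj_iff
        rw [h2, hiff]
        constructor
        · rintro (hh | ⟨rfl, rfl⟩ | ⟨rfl, rfl⟩)
          · exact Or.inl hh
          · exact Or.inr (Or.inl ⟨rfl, rfl⟩)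
          · exact Or.inr (Or.inr ⟨rfl, rfl⟩)
        · rintro (hh | ⟨h1, h2⟩ | ⟨h1, h2⟩)
          · exact Or.inl hh
          · exact Or.inr (Or.inl ⟨by apply e.toEquiv.injective; simpa using h1,
              by apply e.toEquiv.injective; simpa using h2⟩)
          · exact Or.inr (Or.inr ⟨by apply e.toEquiv.injective; simpa using h1,
              by apply e.toEquiv.injective; simpa using h2⟩)

def isoInduceImage {W1 W2 : Type} {G1 : SimpleGraph W1} {G2 : SimpleGraph W2}
    (e : G1 ≃g G2) (S : Set W1) : G1.induce S ≃g G2.induce (e '' S) where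
  toEquiv := e.toEquiv.image S
  map_rel_iff' := by
    intro a b
    simp only [Equiv.image, Equiv.Set.image, Equiv.Set.imageOfInjOn, Equiv.coe_fn_mk,
      comap_adj, Function.Embedding.coe_subtype]
    exact e.map_adj_iff

lemma fuzzySub_transport {U W1 W2 : Type} {H : SimpleGraph U} {G1 : SimpleGraph W1}
    {G2 : SimpleGraph W2} (e : G1 ≃g G2)
    (h : IsProperFuzzyOddSubdivision H G1) : IsProperFuzzyOddSubdivision H G2 := by
  obtain ⟨x, S, hS, hsymm, hbranch, hcross, hcover, hadj, hpath⟩ := h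
  refine ⟨x.trans e.toEquiv.toEmbedding, fun u v h => e '' S u v h,
    fun u v h => ⟨⟨_, (hS u v h).1, rfl⟩, ⟨_, (hS u v h).2, rfl⟩⟩, ?_, ?_, ?_, ?_, ?_, ?_⟩
  · intro u v h; show e '' S v u _ = e '' S u v h; rw [hsymm]
  · rintro u v h w ⟨w0, hw0, rfl⟩ ⟨u0, hu0⟩
    have : x u0 = w0 := by simpa using hu0
    rcases hbranch u v h w0 hw0 ⟨u0, this⟩ with h1 | h1 <;> [left; right] <;>
      simp [h1, Function.Embedding.trans_apply]
  · rintro u v h k l h' hne w ⟨w0, hw0, rfl⟩ ⟨w1, hw1, hw1e⟩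
    have hww : w1 = w0 := e.injective hw1e
    subst hww
    obtain ⟨u0, hu0⟩ := hcross u v h k l h' hne w1 hw0 hw1
    exact ⟨u0, by simp [← hu0, Function.Embedding.trans_apply]⟩
  · intro w
    rcases hcover (e.symm w) with ⟨u0, hu0⟩ | ⟨u, v, h, hw⟩
    · left; exact ⟨u0, by simp [Function.Embedding.trans_apply, hu0]⟩
    · right; exact ⟨u, v, h, ⟨e.symm w, hw, by simp⟩⟩
  · intro a b hab
    have : G1.Adj (e.symm a) (e.symm b) := by
      rw [← e.map_adj_iff]; simpa using hab
    obtain ⟨u, v, h, h1, h2⟩ := hadj _ _ this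
    exact ⟨u, v, h, ⟨_, h1, by simp⟩, ⟨_, h2, by simp⟩⟩
  · intro u v h
    have := (hpath u v h).transport (isoInduceImage e (S u v h))
    convert this using 2 <;> rfl

def subVert {V0 : Type} (H : SimpleGraph V0) : Type := V0 ⊕ {p : V0 × V0 // H.Adj p.1 p.2}

def subAdj {V0 : Type} (H : SimpleGraph V0) : subVert H → subVert H → Prop
  | Sum.inl u, Sum.inr q => u = q.1.1
  | Sum.inr q, Sum.inl u => u = q.1.1
  | Sum.inr q, Sum.inr q' => q.1.1 = q'.1.2 ∧ q.1.2 = q'.1.1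
  | Sum.inl _, Sum.inl _ => False

def subGraph {V0 : Type} (H : SimpleGraph V0) : SimpleGraph (subVert H) where
  Adj := subAdj H
  symm := ⟨by
    rintro (u | q) (v | q') h <;> simp only [subAdj] at h ⊢ <;> tauto⟩
  loopless := ⟨by
    rintro (u | q) h <;> simp only [subAdj] at h
    exact (q.2.ne h.1).elim⟩

noncomputable instance {V0 : Type} [Fintype V0] (H : SimpleGraph V0) : Fintype (subVert H) := by
  have : Finite (subVert H) := by
    unfold subVert; infer_instance
  exact Fintype.ofFinite _

def subSet {V0 : Type} (H : SimpleGraph V0) (u v : V0) (h : H.Adj u v) : Set (subVert H) :=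
  {Sum.inl u, Sum.inl v, Sum.inr ⟨(u, v), h⟩, Sum.inr ⟨(v, u), h.symm⟩}

lemma subGraph_adj {V0 : Type} (H : SimpleGraph V0) (a b : subVert H) :
    (subGraph H).Adj a b ↔ subAdj H a b := Iff.rfl

lemma subGraph_path {V0 : Type} (H : SimpleGraph V0) (u v : V0) (h : H.Adj u v) :
    IsFuzzyOddPath ((subGraph H).induce (subSet H u v h))
      ⟨Sum.inl u, by left; rfl⟩ ⟨Sum.inl v, by right; left; rfl⟩ (fun n => 3 ≤ n) := by
  have hne : u ≠ v := h.ne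
  set S := subSet H u v h with hSdef
  let A : ↥S := ⟨Sum.inl u, by left; rfl⟩
  let M1 : ↥S := ⟨Sum.inr ⟨(u, v), h⟩, by right; right; left; rfl⟩
  let M2 : ↥S := ⟨Sum.inr ⟨(v, u), h.symm⟩, by right; right; right; rfl⟩
  let B : ↥S := ⟨Sum.inl v, by right; left; rfl⟩
  let F := (subGraph H).induce S
  have h1 : F.Adj A M1 := rfl
  have h2 : F.Adj M1 M2 := ⟨rfl, rfl⟩
  have h3 : F.Adj M2 B := rfl
  let p : F.Walk A B := .cons h1 (.cons h2 (.cons h3 .nil))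
  have hsup : p.support = [A, M1, M2, B] := rfl
  have t1 : p.toSubgraph.Adj A M1 := by
    simp only [p, Walk.toSubgraph, Subgraph.sup_adj, subgraphOfAdj_adj]
    tauto
  have t2 : p.toSubgraph.Adj M1 M2 := by
    simp only [p, Walk.toSubgraph, Subgraph.sup_adj, subgraphOfAdj_adj]
    tauto
  have t3 : p.toSubgraph.Adj M2 B := by
    simp only [p, Walk.toSubgraph, Subgraph.sup_adj, subgraphOfAdj_adj]
    tauto
  refine ⟨p, ?_, ⟨1, rfl⟩, Nat.le.refl, ?_, ?_⟩
  · have eAM1 : A ≠ M1 := by simp [A, M1, Subtype.ext_iff]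
    have eAM2 : A ≠ M2 := by simp [A, M2, Subtype.ext_iff]
    have eAB : A ≠ B := fun hh => hne (Sum.inl.inj (Subtype.ext_iff.mp hh))
    have eM12 : M1 ≠ M2 := fun hh => hne
      ((Prod.ext_iff.mp (congrArg Subtype.val (Sum.inr.inj (Subtype.ext_iff.mp hh)))).1)
    have eM1B : M1 ≠ B := by simp [M1, B, Subtype.ext_iff]
    have eM2B : M2 ≠ B := by simp [M2, B, Subtype.ext_iff]
    rw [Walk.isPath_def, hsup]
    simp [List.nodup_cons, eAM1, eAM2, eAB, eM12, eM1B, eM2B]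
  · intro t
    obtain ⟨tv, ht⟩ := t
    rw [hsup]
    rcases ht with rfl | rfl | rfl | rfl <;>
      simp [A, M1, M2, B, List.mem_cons, Subtype.mk.injEq]
  · left
    intro c d
    constructor
    · intro hcd
      obtain ⟨cv, hc⟩ := c
      obtain ⟨dv, hd⟩ := d
      have hFadj : subAdj H cv dv := hcd
      rcases hc with rfl | rfl | rfl | rfl <;> rcases hd with rfl | rfl | rfl | rfl <;>
        simp only [subAdj, Subtype.mk.injEq, Prod.mk.injEq] at hFadj <;>
        first
          | exact hFadj.elim
          | exact (hne hFadj).elim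
          | exact (hne hFadj.symm).elim
          | exact (hne hFadj.1).elim
          | exact (hne hFadj.1.symm).elim
          | exact t1
          | exact t1.symm
          | exact t2
          | exact t2.symm
          | exact t3
          | exact t3.symm
    · intro hcd
      exact hcd.adj_sub

lemma subGraph_fuzzy {V0 : Type} (H : SimpleGraph V0) :
    IsProperFuzzyOddSubdivision H (subGraph H) := by
  classical
  refine ⟨⟨Sum.inl, Sum.inl_injective⟩, subSet H, fun u v h => ⟨by left; rfl, by right; left; rfl⟩,
    ?_, ?_, ?_, ?_, ?_, ?_⟩
  · intro u v h
    unfold subSet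
    ext w
    constructor <;> rintro (rfl | rfl | rfl | rfl)
    · right; left; rfl
    · left; rfl
    · right; right; right; rfl
    · right; right; left; rfl
    · right; left; rfl
    · left; rfl
    · right; right; right; rfl
    · right; right; left; rfl
  · rintro u v h w hw ⟨u0, rfl⟩
    rcases hw with h1 | h1 | h1 | h1
    · left; exact h1
    · right; exact h1
    · exact absurd h1 (by simp)
    · exact (Sum.inl_ne_inr (Set.mem_singleton_iff.mp h1)).elim
  · rintro u v h k l h' hne w hw hw'
    rcases hw with rfl | rfl | rfl | rfl
    · exact ⟨u, rfl⟩
    · exact ⟨v, rfl⟩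
    all_goals {
      exfalso
      rcases hw' with h1 | h1 | h1 | h1 <;> first
        | exact Sum.inl_ne_inr h1.symm |>.elim
        | (apply hne
           have := (Sum.inr_injective h1)
           have h2 := congrArg (fun q => (q : {p : V0 × V0 // H.Adj p.1 p.2}).1) this
           simp only [Subtype.mk.injEq] at this
           rw [Prod.ext_iff] at this
           obtain ⟨h3, h4⟩ := this
           simp only at h3 h4
           subst h3; subst h4
           first | rfl | exact Sym2.eq_swap | exact Sym2.eq_swap.symm) }
  · rintro (w | ⟨⟨a, b⟩, hab⟩)
    · exact Or.inl ⟨w, rfl⟩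
    · right
      exact ⟨a, b, hab, by right; right; left; rfl⟩
  · rintro (a | q) (b | q') hab <;> simp only [subGraph, subAdj] at hab
    · subst hab
      exact ⟨q'.1.1, q'.1.2, q'.2, by left; rfl, by right; right; left; exact congrArg Sum.inr (Subtype.ext rfl)⟩
    · subst hab
      exact ⟨q.1.1, q.1.2, q.2, by right; right; left; exact congrArg Sum.inr (Subtype.ext rfl), by left; rfl⟩
    · refine ⟨q.1.1, q.1.2, q.2, by right; right; left; exact congrArg Sum.inr (Subtype.ext rfl), ?_⟩
      right; right; right
      refine congrArg Sum.inr (Subtype.ext ?_)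
      exact Prod.ext hab.2.symm hab.1.symm
  · exact fun u v h => subGraph_path H u v h



def isoCompl {W1 W2 : Type} {G1 : SimpleGraph W1} {G2 : SimpleGraph W2} (e : G1 ≃g G2) :
    G1ᶜ ≃g G2ᶜ where
  toEquiv := e.toEquiv
  map_rel_iff' := by
    intro a b
    simp only [compl_adj, ne_eq, EmbeddingLike.apply_eq_iff_eq]
    constructor
    · rintro ⟨h1, h2⟩
      exact ⟨h1, fun hh => h2 (e.map_adj_iff.mpr hh)⟩
    · rintro ⟨h1, h2⟩
      exact ⟨h1, fun hh => h2 (e.map_adj_iff.mp hh)⟩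

noncomputable def isoIndInd {V : Type} (G : SimpleGraph V) (X : Set V) (S : Set ↥X) :
    (G.induce X).induce S ≃g G.induce (Subtype.val '' S) where
  toEquiv := Equiv.Set.image Subtype.val S Subtype.val_injective
  map_rel_iff' := Iff.rfl

lemma induce_compl_eq {V : Type} (G : SimpleGraph V) (S : Set V) :
    (Gᶜ).induce S = (G.induce S)ᶜ := by
  ext a b
  show Gᶜ.Adj a.1 b.1 ↔ _
  rw [compl_adj, compl_adj]
  constructor
  · rintro ⟨h1, h2⟩
    exact ⟨fun hh => h1 (congrArg Subtype.val hh), h2⟩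
  · rintro ⟨h1, h2⟩
    exact ⟨fun hh => h1 (Subtype.ext hh), h2⟩

lemma anticomplete_helper {V0 : Type} [Fintype V0] (H : SimpleGraph V0)
    {εA : ℝ} (hεA : 0 < εA)
    (thmA : ∀ (V : Type) [Fintype V] (G : SimpleGraph V) (μ : Set V → ℝ),
      IsMass G μ → EpsCoherent G μ εA →
      ∃ S : Set V, IsProperFuzzyOddSubdivision H (G.induce S))
    {V : Type} [Fintype V] {X : Set V} (G' : SimpleGraph ↥X)
    (hbig : 1 / εA < (X.ncard : ℝ))
    (hnbr : ∀ v : ↥X, ((G'.neighborSet v).ncard : ℝ) < εA * (X.ncard : ℝ))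
    (hno : ¬ ∃ S : Set ↥X, IsProperFuzzyOddSubdivision H (G'.induce S)) :
    ∃ A B : Set ↥X, Anticomplete G' A B ∧ εA * (X.ncard : ℝ) ≤ (A.ncard : ℝ) ∧
      εA * (X.ncard : ℝ) ≤ (B.ncard : ℝ) := by
  classical
  haveI : Fintype ↥X := Fintype.ofFinite _
  have hX0 : (0:ℝ) < (X.ncard : ℝ) := lt_trans (by positivity) hbig
  set c : ℝ := (X.ncard : ℝ) with hc
  by_contra hcon
  push_neg at hcon
  set μ : Set ↥X → ℝ := fun Y => (Y.ncard : ℝ) / c with hμ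
  have hmass : IsMass G' μ := by
    constructor
    · simp [hμ]
    · simp only [hμ, Set.ncard_univ, Nat.card_coe_set_eq]
      exact div_self (ne_of_gt hX0)
    · intro Y Z hYZ
      apply (div_le_div_iff_of_pos_right hX0).mpr
      exact_mod_cast Set.ncard_le_ncard hYZ Z.toFinite
    · intro Y Z
      simp only [hμ]
      rw [← add_div]
      apply (div_le_div_iff_of_pos_right hX0).mpr
      exact_mod_cast Set.ncard_union_le Y Z
  have hcoh : EpsCoherent G' μ εA := by
    refine ⟨?_, ?_, ?_⟩
    · intro v
      simp only [hμ, Set.ncard_singleton, Nat.cast_one]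
      rw [div_lt_iff₀ hX0]
      calc (1:ℝ) = εA * (1/εA) := by field_simp
      _ < εA * c := by
        apply mul_lt_mul_of_pos_left hbig hεA
    · intro v
      simp only [hμ]
      rw [div_lt_iff₀ hX0]
      exact hnbr v
    · intro A B hAB
      by_contra hge
      push_neg at hge
      have h1 : εA * c ≤ (A.ncard : ℝ) := by
        have h := le_trans hge (min_le_left (μ A) (μ B))
        simp only [hμ] at h
        rwa [le_div_iff₀ hX0] at h
      have h2 : εA * c ≤ (B.ncard : ℝ) := by
        have h := le_trans hge (min_le_right (μ A) (μ B))
        simp only [hμ] at h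
        rwa [le_div_iff₀ hX0] at h
      exact absurd h2 (not_le.mpr (hcon A B hAB h1))
  obtain ⟨S, hS⟩ := thmA ↥X G' μ hmass hcoh
  exact hno ⟨S, hS⟩

end Aux

/-- assuming Theorem A (the coherent massed-graph theorem for `H`) and Rödl's
theorem, every graph with no induced proper fuzzy odd subdivision of `H` nor complement of one has
the strong Erdős–Hajnal conclusion. -/
theorem strongEH_from_thmA_and_rodl {V0 : Type} [Fintype V0] (H : SimpleGraph V0)
    (thmA : ∃ ε' : ℝ, 0 < ε' ∧ ∀ (V : Type) [Fintype V] (G : SimpleGraph V) (μ : Set V → ℝ),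
      IsMass G μ → EpsCoherent G μ ε' →
      ∃ S : Set V, IsProperFuzzyOddSubdivision H (G.induce S))
    (rodl : ∀ (W0 : Type) [Fintype W0] (H' : SimpleGraph W0) (ε' : ℝ), 0 < ε' →
      ∃ δ : ℝ, 0 < δ ∧ ∀ (V : Type) [Fintype V] (G : SimpleGraph V),
        (¬ ∃ S : Set V, Nonempty (H' ≃g G.induce S)) →
        ∃ X : Set V, δ * (Fintype.card V : ℝ) ≤ (X.ncard : ℝ) ∧
          ((∀ v : X, (((G.induce X).neighborSet v).ncard : ℝ) < ε' * (X.ncard : ℝ)) ∨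
           (∀ v : X, ((((G.induce X)ᶜ).neighborSet v).ncard : ℝ) < ε' * (X.ncard : ℝ)))) :
    ∃ ε : ℝ, 0 < ε ∧ ∀ (V : Type) [Fintype V] (G : SimpleGraph V), 1 < Fintype.card V →
      (¬ ∃ S : Set V, IsProperFuzzyOddSubdivision H (G.induce S)) →
      (¬ ∃ S : Set V, IsProperFuzzyOddSubdivision H ((G.induce S)ᶜ)) →
      ∃ A B : Set V, ε * (Fintype.card V : ℝ) ≤ (A.ncard : ℝ) ∧
        ε * (Fintype.card V : ℝ) ≤ (B.ncard : ℝ) ∧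
        (Complete G A B ∨ Anticomplete G A B) := by
  classical
  obtain ⟨εA, hεA, hthmA⟩ := thmA
  obtain ⟨δ, hδ, hrodl⟩ := rodl (subVert H) (subGraph H) εA hεA
  set T : ℝ := 2 / (δ * εA) + 1 with hTdef
  have hT0 : 0 < T := by positivity
  set ε : ℝ := min (δ * εA) (1 / T) with hεdef
  have hε0 : 0 < ε := lt_min (by positivity) (by positivity)
  have hεle1 : ε ≤ δ * εA := min_le_left _ _
  have hεle2 : ε ≤ 1 / T := min_le_right _ _
  clear_value T ε
  refine ⟨ε, hε0, ?_⟩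
  intro V _ G hcard hno1 hno2
  set n : ℝ := (Fintype.card V : ℝ) with hn
  have hn1 : (1:ℝ) < n := by rw [hn]; exact_mod_cast hcard
  clear_value n
  have hn0 : 0 < n := by linarith
  by_cases hsmall : n ≤ T
  · obtain ⟨a, b, hab⟩ := Fintype.exists_pair_of_one_lt_card hcard
    have h1 : ε * n ≤ 1 := by
      calc ε * n ≤ (1/T) * T := mul_le_mul hεle2 hsmall hn0.le (by positivity)
      _ = 1 := by field_simp
    refine ⟨{a}, {b}, ?_, ?_, ?_⟩
    · rw [Set.ncard_singleton]; exact_mod_cast h1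
    · rw [Set.ncard_singleton]; exact_mod_cast h1
    · have hdis : Disjoint ({a} : Set V) {b} := Set.disjoint_singleton.mpr hab
      by_cases hadj : G.Adj a b
      · left
        refine ⟨hdis, ?_⟩
        intro x hx y hy
        rw [Set.mem_singleton_iff] at hx hy
        subst hx; subst hy; exact hadj
      · right
        refine ⟨hdis, ?_⟩
        intro x hx y hy
        rw [Set.mem_singleton_iff] at hx hy
        subst hx; subst hy; exact hadj
  · push_neg at hsmall
    have hGno : ¬ ∃ S : Set V, Nonempty ((subGraph H) ≃g G.induce S) := by
      rintro ⟨S, ⟨e⟩⟩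
      exact hno1 ⟨S, fuzzySub_transport e (subGraph_fuzzy H)⟩
    obtain ⟨X, hXcard, hcase⟩ := hrodl V G hGno
    have hbig : 1 / εA < (X.ncard : ℝ) := by
      have hδT : δ * T = 2/εA + δ := by rw [hTdef]; field_simp
      have h12 : (2:ℝ)/εA = 1/εA + 1/εA := by ring
      have h13 : (0:ℝ) < 1/εA := by positivity
      have h2 : δ * T < δ * n := mul_lt_mul_of_pos_left hsmall hδ
      have h3 : δ * n ≤ (X.ncard : ℝ) := by rw [hn]; exact hXcard
      linarith
    have hbound : ∀ m : ℝ, εA * (X.ncard:ℝ) ≤ m → ε * n ≤ m := by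
      intro m hm
      calc ε * n ≤ (δ*εA) * n := mul_le_mul_of_nonneg_right hεle1 hn0.le
      _ = εA * (δ * n) := by ring
      _ ≤ εA * (X.ncard:ℝ) := mul_le_mul_of_nonneg_left (by rw [hn]; exact hXcard) hεA.le
      _ ≤ m := hm
    rcases hcase with hsp | hsp
    · have hno : ¬ ∃ S : Set ↥X, IsProperFuzzyOddSubdivision H ((G.induce X).induce S) := by
        rintro ⟨S, hS⟩
        exact hno1 ⟨Subtype.val '' S, fuzzySub_transport (isoIndInd G X S) hS⟩
      obtain ⟨A, B, ⟨hdis, hanti⟩, hA, hB⟩ :=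
        anticomplete_helper H hεA hthmA (G.induce X) hbig hsp hno
      refine ⟨Subtype.val '' A, Subtype.val '' B, ?_, ?_, Or.inr ⟨?_, ?_⟩⟩
      · rw [Set.ncard_image_of_injective _ Subtype.val_injective]; exact hbound _ hA
      · rw [Set.ncard_image_of_injective _ Subtype.val_injective]; exact hbound _ hB
      · exact (Set.disjoint_image_iff Subtype.val_injective).mpr hdis
      · rintro a' ⟨a, ha, rfl⟩ b' ⟨b, hb, rfl⟩ hadj
        exact hanti a ha b hb hadj
    · have hno : ¬ ∃ S : Set ↥X, IsProperFuzzyOddSubdivision H (((G.induce X)ᶜ).induce S) := by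
        rintro ⟨S, hS⟩
        rw [induce_compl_eq] at hS
        exact hno2 ⟨Subtype.val '' S, fuzzySub_transport (isoCompl (isoIndInd G X S)) hS⟩
      obtain ⟨A, B, ⟨hdis, hanti⟩, hA, hB⟩ :=
        anticomplete_helper H hεA hthmA ((G.induce X)ᶜ) hbig hsp hno
      refine ⟨Subtype.val '' A, Subtype.val '' B, ?_, ?_, Or.inl ⟨?_, ?_⟩⟩
      · rw [Set.ncard_image_of_injective _ Subtype.val_injective]; exact hbound _ hA
      · rw [Set.ncard_image_of_injective _ Subtype.val_injective]; exact hbound _ hB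
      · exact (Set.disjoint_image_iff Subtype.val_injective).mpr hdis
      · rintro a' ⟨a, ha, rfl⟩ b' ⟨b, hb, rfl⟩
        have hne : a ≠ b := fun hh => Set.disjoint_left.mp hdis ha (hh ▸ hb)
        have hno' := hanti a ha b hb
        by_contra hnadj
        exact hno' ⟨hne, hnadj⟩
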